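/- Let j ≥ 0. There exists a constant C_j > 0 depending only on j such that for all n ≥ 1, all λ_1, …, λ_n ∈ 𝔻 with associated Malmquist family (e_k)_{1≤k≤n}, all 1 ≤ k ≤ n, and all λ⋆ ∈ ℂ with |λ⋆| = 1, one has |e_k^{(j)}(λ⋆)| ≤ C_j · (1 − |λ_k|²)^{1/2} · k^j / (dist(λ⋆, σ))^{j+1}, where σ = {λ_1, …, λ_n} and dist(λ⋆, σ) = min_i |λ⋆ − λ_i|. -/

import Mathlib

/-- The elementary Blaschke factor `b_a(z) = (a - z)/(1 - ā z)`. -/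
noncomputable def blaschkeFactor (a z : ℂ) : ℂ := (a - z) / (1 - (starRingEnd ℂ) a * z)

/-- The Malmquist family associated with `λ_1, …, λ_n ∈ 𝔻`:
`e_k(z) = (∏_{j<k} b_{λ_j}(z)) · (1 - |λ_k|²)^{1/2} / (1 - conj(λ_k) z)`. -/
noncomputable def malmquist {n : ℕ} (lam : Fin n → ℂ) (k : Fin n) (z : ℂ) : ℂ :=
  (∏ j ∈ Finset.Iio k, blaschkeFactor (lam j) z) *
    ((Real.sqrt (1 - ‖lam k‖ ^ 2) : ℂ) / (1 - (starRingEnd ℂ) (lam k) * z))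

open scoped Nat in
open Metric in
/-- Cauchy estimate for iterated derivatives. -/
theorem cauchy_est_aux {f : ℂ → ℂ} {c : ℂ} {r M : ℝ} (hr : 0 < r)
    (hd : DifferentiableOn ℂ f (closedBall c r))
    (hM : ∀ z ∈ closedBall c r, ‖f z‖ ≤ M) (j : ℕ) :
    ‖iteratedDeriv j f c‖ ≤ (j ! : ℝ) * M / r ^ j := by
  have hM0 : 0 ≤ M := le_trans (norm_nonneg _) (hM c (Metric.mem_closedBall_self hr.le))
  lift r to NNReal using hr.le with R hRr
  have hR : 0 < R := by exact_mod_cast hr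
  have h := hd.hasFPowerSeriesOnBall hR
  have key := h.factorial_smul (y := (1:ℂ)) j
  have h1 : iteratedDeriv j f c = iteratedFDeriv ℂ j f c (fun _ ↦ (1:ℂ)) := by
    rw [iteratedDeriv_eq_iteratedFDeriv]
  rw [h1, ← key]
  have hintle : (2 * Real.pi)⁻¹ * ∫ θ : ℝ in (0)..2 * Real.pi, ‖f (circleMap c R θ)‖ ≤ M := by
    have hint : ∫ θ : ℝ in (0)..2 * Real.pi, ‖f (circleMap c R θ)‖ ≤
        ∫ _ : ℝ in (0)..2 * Real.pi, M := by
      refine intervalIntegral.integral_mono_on Real.two_pi_pos.le ?_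
        intervalIntegrable_const ?_
      · apply Continuous.intervalIntegrable
        exact (hd.continuousOn.comp_continuous (continuous_circleMap c R)
          (fun θ => by simpa using circleMap_mem_closedBall c hR.le θ)).norm
      · intro θ _
        exact hM _ (by simpa using circleMap_mem_closedBall c hR.le θ)
    calc (2 * Real.pi)⁻¹ * ∫ θ : ℝ in (0)..2 * Real.pi, ‖f (circleMap c R θ)‖
        ≤ (2 * Real.pi)⁻¹ * ∫ _ : ℝ in (0)..2 * Real.pi, M := by
          have : (0:ℝ) < (2 * Real.pi)⁻¹ := by positivity
          nlinarith
      _ = M := by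
          rw [intervalIntegral.integral_const, sub_zero, smul_eq_mul]
          field_simp
  have hle : ‖cauchyPowerSeries f c R j (fun _ ↦ (1:ℂ))‖ ≤ M * ((R:ℝ)⁻¹) ^ j := by
    have h2 := (cauchyPowerSeries f c R j).le_opNorm (fun _ ↦ (1:ℂ))
    simp only [norm_one, Finset.prod_const, one_pow, mul_one] at h2
    refine h2.trans ((norm_cauchyPowerSeries_le f c R j).trans ?_)
    have habs : |(R:ℝ)| = (R:ℝ) := abs_of_nonneg R.2
    rw [habs]
    have : (0:ℝ) ≤ ((R:ℝ)⁻¹) ^ j := by positivity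
    exact mul_le_mul_of_nonneg_right hintle this
  calc ‖j ! • cauchyPowerSeries f c R j (fun _ ↦ (1:ℂ))‖
      = (j ! : ℝ) * ‖cauchyPowerSeries f c R j (fun _ ↦ (1:ℂ))‖ := by
        rw [nsmul_eq_mul, norm_mul]
        norm_num
    _ ≤ (j ! : ℝ) * (M * ((R:ℝ)⁻¹) ^ j) := by
        have : (0:ℝ) ≤ (j ! : ℝ) := by positivity
        exact mul_le_mul_of_nonneg_left hle this
    _ = (j ! : ℝ) * M / (R:ℝ) ^ j := by
        rw [inv_pow]
        ring

open scoped Nat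

/-- For each `j ≥ 0` there is `C_j > 0` such that for all `n ≥ 1`,
all `λ_1, …, λ_n ∈ 𝔻` with Malmquist family `(e_k)`, all `1 ≤ k ≤ n` and all `|λ⋆| = 1`:
`|e_k^{(j)}(λ⋆)| ≤ C_j (1-|λ_k|²)^{1/2} k^j / dist(λ⋆, σ)^{j+1}` (here the index of
`k : Fin n` is the 1-based index `(k : ℕ) + 1`). -/
theorem malmquist_deriv_estimate (j : ℕ) :
    ∃ C : ℝ, 0 < C ∧
      ∀ (n : ℕ), 1 ≤ n → ∀ lam : Fin n → ℂ, (∀ i, ‖lam i‖ < 1) →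
        ∀ k : Fin n, ∀ lamstar : ℂ, ‖lamstar‖ = 1 →
          ‖iteratedDeriv j (malmquist lam k) lamstar‖
            ≤ C * Real.sqrt (1 - ‖lam k‖ ^ 2) * ((k : ℕ) + 1) ^ j /
                Metric.infDist lamstar (Set.range lam) ^ (j + 1) := by
  refine ⟨4 ^ (j + 1) * j !, by positivity, ?_⟩
  intro n hn lam hlam k lamstar hstar
  set s : ℝ := Real.sqrt (1 - ‖lam k‖ ^ 2) with hs_def
  have hs0 : 0 ≤ s := Real.sqrt_nonneg _
  set d : ℝ := Metric.infDist lamstar (Set.range lam) with hd_def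
  -- positivity of d
  have hσne : (Set.range lam).Nonempty := ⟨lam k, k, rfl⟩
  have hclosed : IsClosed (Set.range lam) := (Set.finite_range lam).isClosed
  have hnotmem : lamstar ∉ Set.range lam := by
    rintro ⟨i, hi⟩
    have h1 := hlam i
    rw [hi, hstar] at h1
    exact lt_irrefl 1 h1
  have hd : 0 < d := (hclosed.notMem_iff_infDist_pos hσne).1 hnotmem
  have hdle : ∀ i : Fin n, d ≤ ‖lamstar - lam i‖ := by
    intro i
    have h1 := Metric.infDist_le_dist_of_mem (x := lamstar) (Set.mem_range_self (f := lam) i)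
    rwa [Complex.dist_eq] at h1
  set K : ℝ := ((k : ℕ) : ℝ) + 1 with hK_def
  have hK1 : (1:ℝ) ≤ K := by
    have : (0:ℝ) ≤ ((k : ℕ) : ℝ) := Nat.cast_nonneg _
    linarith
  have hK0 : (0:ℝ) < K := lt_of_lt_of_le one_pos hK1
  set r : ℝ := d / (4 * K) with hr_def
  have hr : 0 < r := by positivity
  have hrd : r ≤ d / 4 := by
    rw [hr_def]
    rw [div_le_div_iff₀ (by positivity) (by norm_num)]
    nlinarith
  have hrK : r * K = d / 4 := by
    rw [hr_def]; field_simp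
  -- |1 - conj a * λ⋆| = |λ⋆ - a|
  have habs1 : ∀ a : ℂ, ‖1 - (starRingEnd ℂ) a * lamstar‖
      = ‖lamstar - a‖ := by
    intro a
    have h1 : (1 : ℂ) - (starRingEnd ℂ) a * lamstar
        = lamstar * (starRingEnd ℂ) (lamstar - a) := by
      rw [map_sub, mul_sub, Complex.mul_conj]
      have h2 : Complex.normSq lamstar = 1 := by
        rw [← Complex.sq_norm, hstar]; norm_num
      rw [h2]; push_cast; ring
    rw [h1, norm_mul, hstar, Complex.norm_conj, one_mul]
  -- denominator lower bound on the ball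
  have hden : ∀ (i : Fin n), ∀ z ∈ Metric.closedBall lamstar r,
      ‖lamstar - lam i‖ - r ≤ ‖1 - (starRingEnd ℂ) (lam i) * z‖ := by
    intro i z hz
    have hz' : ‖z - lamstar‖ ≤ r := by
      rw [Metric.mem_closedBall, Complex.dist_eq] at hz; exact hz
    have key : (1 : ℂ) - (starRingEnd ℂ) (lam i) * lamstar
        = (1 - (starRingEnd ℂ) (lam i) * z) + (starRingEnd ℂ) (lam i) * (z - lamstar) := by
      ring
    have h2 : ‖lamstar - lam i‖
        ≤ ‖1 - (starRingEnd ℂ) (lam i) * z‖ + 1 * r := by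
      calc ‖lamstar - lam i‖
          = ‖1 - (starRingEnd ℂ) (lam i) * lamstar‖ := (habs1 _).symm
        _ ≤ ‖1 - (starRingEnd ℂ) (lam i) * z‖
            + ‖(starRingEnd ℂ) (lam i) * (z - lamstar)‖ := by
            rw [key]; exact norm_add_le _ _
        _ ≤ ‖1 - (starRingEnd ℂ) (lam i) * z‖ + 1 * r := by
            have h3 : ‖(starRingEnd ℂ) (lam i) * (z - lamstar)‖ ≤ 1 * r := by
              rw [norm_mul, Complex.norm_conj]
              exact mul_le_mul (hlam i).le hz' (norm_nonneg _) zero_le_one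
            linarith
    linarith
  have hdenpos : ∀ (i : Fin n), ∀ z ∈ Metric.closedBall lamstar r,
      3 * d / 4 ≤ ‖1 - (starRingEnd ℂ) (lam i) * z‖ := by
    intro i z hz
    have h1 := hden i z hz
    have h2 := hdle i
    linarith
  have hne : ∀ z ∈ Metric.closedBall lamstar r, ∀ i : Fin n,
      (1 : ℂ) - (starRingEnd ℂ) (lam i) * z ≠ 0 := by
    intro z hz i h
    have h1 := hdenpos i z hz
    rw [h, norm_zero] at h1
    linarith
  -- per-factor bound
  have hfac : ∀ (i : Fin n), ∀ z ∈ Metric.closedBall lamstar r,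
      ‖blaschkeFactor (lam i) z‖ ≤ 1 + 2 / (3 * K) := by
    intro i z hz
    have hz' : ‖z - lamstar‖ ≤ r := by
      rw [Metric.mem_closedBall, Complex.dist_eq] at hz; exact hz
    set D : ℝ := ‖lamstar - lam i‖ with hD_def
    have hD : d ≤ D := hdle i
    have hdenom : D - r ≤ ‖1 - (starRingEnd ℂ) (lam i) * z‖ := hden i z hz
    have hDrpos : 0 < D - r := by linarith
    have hnum : ‖lam i - z‖ ≤ D + r := by
      have h4 : lam i - z = (lam i - lamstar) + (lamstar - z) := by ring
      calc ‖lam i - z‖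
          ≤ ‖lam i - lamstar‖ + ‖lamstar - z‖ := by
            rw [h4]; exact norm_add_le _ _
        _ ≤ D + r := by
            have h5 : ‖lam i - lamstar‖ = D := by
              rw [hD_def]; exact norm_sub_rev _ _
            have h6 : ‖lamstar - z‖ ≤ r := by
              rw [norm_sub_rev]; exact hz'
            linarith
    show ‖(lam i - z) / (1 - (starRingEnd ℂ) (lam i) * z)‖ ≤ 1 + 2 / (3 * K)
    rw [norm_div]
    calc ‖lam i - z‖ / ‖1 - (starRingEnd ℂ) (lam i) * z‖
        ≤ (D + r) / (D - r) := by
          apply div_le_div₀ (by positivity) hnum hDrpos hdenom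
      _ ≤ 1 + 2 / (3 * K) := by
          rw [div_le_iff₀ hDrpos]
          have h7 : 2 / (3 * K) * K = 2 / 3 := by field_simp
          nlinarith [mul_le_mul_of_nonneg_left hD (le_of_lt (by positivity : (0:ℝ) < 2 / (3 * K))),
            h7, hrK, hrd, hd]
  -- product bound
  have hprod : ∀ z ∈ Metric.closedBall lamstar r,
      ‖∏ i ∈ Finset.Iio k, blaschkeFactor (lam i) z‖ ≤ 3 := by
    intro z hz
    rw [norm_prod]
    have hb1 : (1:ℝ) ≤ 1 + 2 / (3 * K) := by
      have : (0:ℝ) < 2 / (3 * K) := by positivity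
      linarith
    calc ∏ i ∈ Finset.Iio k, ‖blaschkeFactor (lam i) z‖
        ≤ ∏ _i ∈ Finset.Iio k, (1 + 2 / (3 * K)) :=
          Finset.prod_le_prod (fun i _ => norm_nonneg _) (fun i hi => hfac i z hz)
      _ = (1 + 2 / (3 * K)) ^ (k : ℕ) := by rw [Finset.prod_const, Fin.card_Iio]
      _ ≤ (1 + 2 / (3 * K)) ^ ((k : ℕ) + 1) := by
          exact pow_le_pow_right₀ hb1 (Nat.le_succ _)
      _ ≤ Real.exp (2 / (3 * K)) ^ ((k : ℕ) + 1) := by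
          apply pow_le_pow_left₀ (by positivity)
          linarith [Real.add_one_le_exp (2 / (3 * K))]
      _ = Real.exp ((((k : ℕ) : ℝ) + 1) * (2 / (3 * K))) := by
          rw [← Real.exp_nat_mul]
          push_cast
          ring_nf
      _ = Real.exp (2 / 3) := by
          congr 1
          rw [← hK_def]
          field_simp
      _ ≤ 3 := by
          have h1 : Real.exp (2 / 3) ≤ Real.exp 1 := Real.exp_le_exp.2 (by norm_num)
          have h2 := Real.exp_one_lt_d9
          linarith
  -- sup norm bound
  have hM : ∀ z ∈ Metric.closedBall lamstar r, ‖malmquist lam k z‖ ≤ 3 * (s / (3 * d / 4)) := by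
    intro z hz
    show ‖(∏ i ∈ Finset.Iio k, blaschkeFactor (lam i) z) *
      ((s : ℂ) / (1 - (starRingEnd ℂ) (lam k) * z))‖ ≤ 3 * (s / (3 * d / 4))
    rw [norm_mul]
    have h1 : ‖(s : ℂ) / (1 - (starRingEnd ℂ) (lam k) * z)‖ ≤ s / (3 * d / 4) := by
      rw [norm_div, Complex.norm_real, Real.norm_of_nonneg hs0]
      exact div_le_div_of_nonneg_left hs0 (by positivity) (hdenpos k z hz)
    exact mul_le_mul (hprod z hz) h1 (norm_nonneg _) (by norm_num)
  -- differentiability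
  have hdiff : DifferentiableOn ℂ (malmquist lam k) (Metric.closedBall lamstar r) := by
    intro z hz
    apply DifferentiableAt.differentiableWithinAt
    have heq : malmquist lam k = fun w =>
        (∏ i ∈ Finset.Iio k, blaschkeFactor (lam i) w) *
          ((s : ℂ) / (1 - (starRingEnd ℂ) (lam k) * w)) := rfl
    rw [heq]
    apply DifferentiableAt.mul
    · apply DifferentiableAt.fun_finsetProd
      intro i _
      show DifferentiableAt ℂ (fun w => (lam i - w) / (1 - (starRingEnd ℂ) (lam i) * w)) z
      exact DifferentiableAt.div (by fun_prop) (by fun_prop) (hne z hz i)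
    · exact DifferentiableAt.div (by fun_prop) (by fun_prop) (hne z hz k)
  -- Cauchy estimate
  have hcau := cauchy_est_aux hr hdiff hM j
  clear_value s d K r
  refine hcau.trans (le_of_eq ?_)
  rw [hr_def, div_pow]
  have hKne : K ≠ 0 := ne_of_gt hK0
  have hdne : d ≠ 0 := ne_of_gt hd
  field_simp
  ring
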